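/- Let X be an infinite Hausdorff k-Lindelöf space. Then the following are equivalent: (1) (𝕂(X), V⁺) satisfies α₂(Ω,Γ); (2) (𝕂(X), V⁺) satisfies α₃(Ω,Γ); (3) (𝕂(X), V⁺) satisfies α₄(Ω,Γ); (4) (𝕂(X), V⁺) satisfies S₁(Ω,Γ); (5) X satisfies S₁(𝒦,Γₖ). -/

import Mathlib

open Set Filter Pointwise

universe u

/-- The selection principle `S₁(𝒜,ℬ)`: for each sequence of elements of `𝒜` one can pick one
element from each term so that the set of chosen elements belongs to `ℬ`. -/
def S1 {Y : Type u} (cA cB : Set (Set Y)) : Prop :=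
  ∀ A : ℕ → Set Y, (∀ n, A n ∈ cA) →
    ∃ b : ℕ → Y, (∀ n, b n ∈ A n) ∧ Set.range b ∈ cB

/-- `α₁(𝒜,ℬ)`: for each sequence of infinite elements of `𝒜` there is `B ∈ ℬ` such that
`Aₙ \ B` is finite for each `n`. -/
def Alpha1 {Y : Type u} (cA cB : Set (Set Y)) : Prop :=
  ∀ A : ℕ → Set Y, (∀ n, A n ∈ cA ∧ (A n).Infinite) →
    ∃ B ∈ cB, ∀ n, (A n \ B).Finite

/-- `α₂(𝒜,ℬ)`: for each sequence of infinite elements of `𝒜` there is `B ∈ ℬ` such that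
`Aₙ ∩ B` is infinite for each `n`. -/
def Alpha2 {Y : Type u} (cA cB : Set (Set Y)) : Prop :=
  ∀ A : ℕ → Set Y, (∀ n, A n ∈ cA ∧ (A n).Infinite) →
    ∃ B ∈ cB, ∀ n, (A n ∩ B).Infinite

/-- `α₃(𝒜,ℬ)`: for each sequence of infinite elements of `𝒜` there is `B ∈ ℬ` such that
`Aₙ ∩ B` is infinite for infinitely many `n`. -/
def Alpha3 {Y : Type u} (cA cB : Set (Set Y)) : Prop :=
  ∀ A : ℕ → Set Y, (∀ n, A n ∈ cA ∧ (A n).Infinite) →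
    ∃ B ∈ cB, {n : ℕ | (A n ∩ B).Infinite}.Infinite

/-- `α₄(𝒜,ℬ)`: for each sequence of infinite elements of `𝒜` there is `B ∈ ℬ` such that
`Aₙ ∩ B` is nonempty for infinitely many `n`. -/
def Alpha4 {Y : Type u} (cA cB : Set (Set Y)) : Prop :=
  ∀ A : ℕ → Set Y, (∀ n, A n ∈ cA ∧ (A n).Infinite) →
    ∃ B ∈ cB, {n : ℕ | (A n ∩ B).Nonempty}.Infinite

/-- An ω-cover: a nontrivial open cover such that every finite set lies in some member. -/
def IsOmegaCover {Y : Type u} [TopologicalSpace Y] (cU : Set (Set Y)) : Prop :=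
  (∀ U ∈ cU, IsOpen U) ∧ ⋃₀ cU = Set.univ ∧ Set.univ ∉ cU ∧
    ∀ F : Set Y, F.Finite → ∃ U ∈ cU, F ⊆ U

/-- A k-cover: a nontrivial open cover such that every compact set lies in some member. -/
def IsKCover {Y : Type u} [TopologicalSpace Y] (cU : Set (Set Y)) : Prop :=
  (∀ U ∈ cU, IsOpen U) ∧ ⋃₀ cU = Set.univ ∧ Set.univ ∉ cU ∧
    ∀ K : Set Y, IsCompact K → ∃ U ∈ cU, K ⊆ U

/-- A γ-cover: an infinite open cover such that each finite set is contained in all but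
finitely many members. -/
def IsGammaCover {Y : Type u} [TopologicalSpace Y] (cU : Set (Set Y)) : Prop :=
  (∀ U ∈ cU, IsOpen U) ∧ ⋃₀ cU = Set.univ ∧ cU.Infinite ∧
    ∀ F : Set Y, F.Finite → {U ∈ cU | ¬ F ⊆ U}.Finite

/-- A γₖ-cover: an infinite open cover such that each compact set is contained in all but
finitely many members. -/
def IsGammaKCover {Y : Type u} [TopologicalSpace Y] (cU : Set (Set Y)) : Prop :=
  (∀ U ∈ cU, IsOpen U) ∧ ⋃₀ cU = Set.univ ∧ cU.Infinite ∧
    ∀ K : Set Y, IsCompact K → {U ∈ cU | ¬ K ⊆ U}.Finite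

/-- `Ω`: the collection of ω-covers of `Y`. -/
def OmegaCovers (Y : Type u) [TopologicalSpace Y] : Set (Set (Set Y)) :=
  {cU | IsOmegaCover cU}

/-- `𝒦`: the collection of k-covers of `Y`. -/
def KCovers (Y : Type u) [TopologicalSpace Y] : Set (Set (Set Y)) :=
  {cU | IsKCover cU}

/-- `Γ`: the collection of γ-covers of `Y`. -/
def GammaCovers (Y : Type u) [TopologicalSpace Y] : Set (Set (Set Y)) :=
  {cU | IsGammaCover cU}

/-- `Γₖ`: the collection of γₖ-covers of `Y`. -/
def GammaKCovers (Y : Type u) [TopologicalSpace Y] : Set (Set (Set Y)) :=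
  {cU | IsGammaKCover cU}

/-- `Y` is ω-Lindelöf if every ω-cover contains a countable ω-cover. -/
def OmegaLindelof (Y : Type u) [TopologicalSpace Y] : Prop :=
  ∀ cU : Set (Set Y), IsOmegaCover cU →
    ∃ cV ⊆ cU, cV.Countable ∧ IsOmegaCover cV

/-- `Y` is k-Lindelöf if every k-cover contains a countable k-cover. -/
def KLindelof (Y : Type u) [TopologicalSpace Y] : Prop :=
  ∀ cU : Set (Set Y), IsKCover cU →
    ∃ cV ⊆ cU, cV.Countable ∧ IsKCover cV

/-- `Ω_y`: subsets of `Y \ {y}` having `y` in their closure. -/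
def OmegaPt {Y : Type u} [TopologicalSpace Y] (y : Y) : Set (Set Y) :=
  {A | A ⊆ {y}ᶜ ∧ y ∈ closure A}

/-- `Σ_y`: (ranges of) nontrivial sequences in `Y` converging to `y`. -/
def SigmaPt {Y : Type u} [TopologicalSpace Y] (y : Y) : Set (Set Y) :=
  {S | ∃ f : ℕ → Y, (∀ n, f n ≠ y) ∧
    Filter.Tendsto f Filter.atTop (nhds y) ∧ S = Set.range f}

/-- `2^X`: the hyperspace of closed subsets of `X`. -/
abbrev HClosed (X : Type u) [TopologicalSpace X] : Type u := {F : Set X // IsClosed F}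

/-- The upper Fell topology on `2^X`, generated by the base
`{(Kᶜ)⁺ : K nonempty compact} ∪ {univ}`. -/
instance fellTopology (X : Type u) [TopologicalSpace X] : TopologicalSpace (HClosed X) :=
  TopologicalSpace.generateFrom
    ({S | ∃ K : Set X, IsCompact K ∧ K.Nonempty ∧ S = {F : HClosed X | F.1 ⊆ Kᶜ}} ∪
      {Set.univ})

/-- `𝕂(X)`: the hyperspace of nonempty compact subsets of `X`. -/
abbrev KSp (X : Type u) [TopologicalSpace X] : Type u := {K : Set X // IsCompact K ∧ K.Nonempty}

/-- The upper Vietoris topology on `𝕂(X)`, generated by the base of sets `U⁺`, `U` open. -/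
instance upperVietorisK (X : Type u) [TopologicalSpace X] : TopologicalSpace (KSp X) :=
  TopologicalSpace.generateFrom
    {S | ∃ U : Set X, IsOpen U ∧ S = {K : KSp X | K.1 ⊆ U}}

/-- `𝔽(X)`: the hyperspace of nonempty finite subsets of `X`. -/
abbrev FSp (X : Type u) [TopologicalSpace X] : Type u := {F : Set X // F.Finite ∧ F.Nonempty}

/-- The upper Vietoris topology on `𝔽(X)`, generated by the base of sets `U⁺`, `U` open. -/
instance upperVietorisF (X : Type u) [TopologicalSpace X] : TopologicalSpace (FSp X) :=
  TopologicalSpace.generateFrom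
    {S | ∃ U : Set X, IsOpen U ∧ S = {F : FSp X | F.1 ⊆ U}}

/-- For a topological group `G` with local base `Be` at the neutral element:
`Ω(e) = {ω(U) : U ∈ Be, no nonempty finite F with F·U = G}` where
`ω(U) = {F·U : F nonempty finite}`. -/
def OmegaE {G : Type u} [Group G] (Be : Set (Set G)) : Set (Set (Set G)) :=
  {cU | ∃ U ∈ Be,
    (¬ ∃ F : Set G, F.Finite ∧ F.Nonempty ∧ F * U = Set.univ) ∧
    cU = {V | ∃ F : Set G, F.Finite ∧ F.Nonempty ∧ V = F * U}}

/-- For a topological group `G` with local base `Be` at the neutral element: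
`𝒦(e) = {k(U) : U ∈ Be, no nonempty compact K with K·U = G}` where
`k(U) = {K·U : K nonempty compact}`. -/
def KcalE {G : Type u} [Group G] [TopologicalSpace G] (Be : Set (Set G)) :
    Set (Set (Set G)) :=
  {cU | ∃ U ∈ Be,
    (¬ ∃ K : Set G, IsCompact K ∧ K.Nonempty ∧ K * U = Set.univ) ∧
    cU = {V | ∃ K : Set G, IsCompact K ∧ K.Nonempty ∧ V = K * U}}

/-- Player ONE has a winning strategy in the game `G₁(𝒜,ℬ)`: a strategy assigns to each finite
sequence of TWO's previous moves a member of `𝒜`; it is winning if for every play in which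
TWO's moves follow it, the set of TWO's moves is not in `ℬ`. -/
def OneHasWinningStrategy {Y : Type u} (cA cB : Set (Set Y)) : Prop :=
  ∃ σ : List Y → Set Y, (∀ l : List Y, σ l ∈ cA) ∧
    ∀ b : ℕ → Y, (∀ n, b n ∈ σ (List.ofFn fun i : Fin n => b i)) → Set.range b ∉ cB

namespace Stmt13Aux

variable {X : Type u} [TopologicalSpace X]

/-- `U⁺` as a subset of `𝕂(X)`. -/
def pl (U : Set X) : Set (KSp X) := {K : KSp X | K.1 ⊆ U}

lemma pl_univ : pl (univ : Set X) = univ := by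
  ext K; simp [pl]

lemma pl_injective : Function.Injective (pl (X := X)) := by
  intro U V h
  ext x
  constructor
  · intro hx
    have hm : (⟨{x}, isCompact_singleton, singleton_nonempty x⟩ : KSp X) ∈ pl U := by
      simpa [pl] using hx
    rw [h] at hm
    exact hm rfl
  · intro hx
    have hm : (⟨{x}, isCompact_singleton, singleton_nonempty x⟩ : KSp X) ∈ pl V := by
      simpa [pl] using hx
    rw [← h] at hm
    exact hm rfl

lemma isOpen_pl {U : Set X} (hU : IsOpen U) : IsOpen (pl U) :=
  TopologicalSpace.GenerateOpen.basic _ ⟨U, hU, rfl⟩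

/-- Basis lemma for the upper Vietoris topology. -/
lemma exists_pl_subset {A : Set (KSp X)} (hA : IsOpen A) :
    ∀ K : KSp X, K ∈ A → ∃ U : Set X, IsOpen U ∧ K.1 ⊆ U ∧ pl U ⊆ A := by
  have h : TopologicalSpace.GenerateOpen
      {S | ∃ U : Set X, IsOpen U ∧ S = {K : KSp X | K.1 ⊆ U}} A := hA
  clear hA
  induction h with
  | basic s hs =>
      rintro K hK
      obtain ⟨U, hU, rfl⟩ := hs
      exact ⟨U, hU, hK, subset_rfl⟩
  | univ =>
      intro K _
      exact ⟨univ, isOpen_univ, subset_univ _, subset_univ _⟩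
  | inter s t _ _ ihs iht =>
      rintro K ⟨hKs, hKt⟩
      obtain ⟨U, hU, hKU, hUs⟩ := ihs K hKs
      obtain ⟨V, hV, hKV, hVt⟩ := iht K hKt
      refine ⟨U ∩ V, hU.inter hV, subset_inter hKU hKV, ?_⟩
      intro L hL
      exact ⟨hUs fun x hx => (hL hx).1, hVt fun x hx => (hL hx).2⟩
  | sUnion S _ ih =>
      rintro K ⟨s, hsS, hKs⟩
      obtain ⟨U, h1, h2, h3⟩ := ih s hsS K hKs
      exact ⟨U, h1, h2, h3.trans (subset_sUnion_of_mem hsS)⟩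

/-- Every compact set is contained in infinitely many members of a k-cover. -/
lemma kcover_many {𝒰 : Set (Set X)} (h : IsKCover 𝒰) {K : Set X} (hK : IsCompact K) :
    {U ∈ 𝒰 | K ⊆ U}.Infinite := by
  intro hfin
  have hpt : ∀ U : Set X, ∃ x : X, U ∈ {U ∈ 𝒰 | K ⊆ U} → x ∉ U := by
    intro U
    by_cases hU : U ∈ {U ∈ 𝒰 | K ⊆ U}
    · have hne : U ≠ univ := fun e => h.2.2.1 (e ▸ hU.1)
      obtain ⟨x, hx⟩ := (ne_univ_iff_exists_notMem U).mp hne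
      exact ⟨x, fun _ => hx⟩
    · obtain ⟨x⟩ : Nonempty X := by
        by_contra hempty
        rw [not_nonempty_iff] at hempty
        obtain ⟨V, hV, -⟩ := h.2.2.2 K hK
        have hVu : V = univ := Subset.antisymm (subset_univ V)
          (by rw [Set.univ_eq_empty_iff.mpr hempty]; exact empty_subset V)
        exact h.2.2.1 (hVu ▸ hV)
      exact ⟨x, fun hc => absurd hc hU⟩
  choose f hf using hpt
  have hK' : IsCompact (K ∪ f '' {U ∈ 𝒰 | K ⊆ U}) :=
    hK.union (hfin.image f).isCompact
  obtain ⟨V, hV, hKV⟩ := h.2.2.2 _ hK'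
  have hVmem : V ∈ {U ∈ 𝒰 | K ⊆ U} := ⟨hV, subset_union_left.trans hKV⟩
  exact hf V hVmem (hKV (Or.inr (mem_image_of_mem f hVmem)))

lemma kcover_infinite {𝒰 : Set (Set X)} (h : IsKCover 𝒰) : 𝒰.Infinite :=
  (kcover_many h isCompact_empty).mono fun U hU => hU.1

lemma kcover_diff {𝒰 s : Set (Set X)} (h : IsKCover 𝒰) (hs : s.Finite) :
    IsKCover (𝒰 \ s) := by
  have hk : ∀ K : Set X, IsCompact K → ∃ U ∈ 𝒰 \ s, K ⊆ U := by
    intro K hK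
    obtain ⟨U, hU⟩ := ((kcover_many h hK).diff hs).nonempty
    exact ⟨U, ⟨hU.1.1, hU.2⟩, hU.1.2⟩
  refine ⟨fun U hU => h.1 U hU.1, ?_, fun hu => h.2.2.1 hu.1, hk⟩
  apply eq_univ_iff_forall.mpr
  intro x
  obtain ⟨U, hU, hx⟩ := hk {x} isCompact_singleton
  exact ⟨U, hU, hx rfl⟩

/-- The image of a k-cover of `X` under `⁺` is an ω-cover of `𝕂(X)`. -/
lemma kcover_plus {𝒰 : Set (Set X)} (h : IsKCover 𝒰) : IsOmegaCover (pl '' 𝒰) := by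
  refine ⟨?_, ?_, ?_, ?_⟩
  · rintro _ ⟨U, hU, rfl⟩
    exact isOpen_pl (h.1 U hU)
  · apply eq_univ_iff_forall.mpr
    intro K
    obtain ⟨U, hU, hKU⟩ := h.2.2.2 K.1 K.2.1
    exact ⟨pl U, ⟨U, hU, rfl⟩, hKU⟩
  · rintro ⟨U, hU, hUeq⟩
    have : U = univ := pl_injective (by rw [hUeq, pl_univ])
    exact h.2.2.1 (this ▸ hU)
  · intro F hF
    have hKc : IsCompact (⋃ P ∈ F, (P : KSp X).1) := hF.isCompact_biUnion fun P _ => P.2.1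
    obtain ⟨U, hU, hKU⟩ := h.2.2.2 _ hKc
    refine ⟨pl U, ⟨U, hU, rfl⟩, fun P hP => ?_⟩
    exact (subset_biUnion_of_mem hP).trans hKU

/-- An infinite subfamily of a γ-cover is a γ-cover. -/
lemma gamma_mono {Y : Type u} [TopologicalSpace Y] {B H : Set (Set Y)} (hB : IsGammaCover B)
    (hHB : H ⊆ B) (hH : H.Infinite) : IsGammaCover H := by
  obtain ⟨ho, _, _, hg⟩ := hB
  refine ⟨fun U hU => ho U (hHB hU), ?_, hH,
    fun F hF => (hg F hF).subset fun U hU => ⟨hHB hU.1, hU.2⟩⟩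
  apply eq_univ_iff_forall.mpr
  intro y
  have hfin := hg {y} (finite_singleton y)
  obtain ⟨U, hU⟩ := (hH.diff hfin).nonempty
  refine ⟨U, hU.1, ?_⟩
  by_contra hy
  exact hU.2 ⟨hHB hU.1, fun hsub => hy (hsub rfl)⟩

/-- Decoding a γ-cover of `𝕂(X)` consisting of `⁺`-sets into a γₖ-cover of `X`. -/
lemma gammaK_of_pl {G : Set (Set X)} (hop : ∀ U ∈ G, IsOpen U)
    (h : IsGammaCover (pl '' G)) : IsGammaKCover G := by
  obtain ⟨_, hc, hi, hg⟩ := h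
  refine ⟨hop, ?_, ?_, ?_⟩
  · apply eq_univ_iff_forall.mpr
    intro x
    have hm : (⟨{x}, isCompact_singleton, singleton_nonempty x⟩ : KSp X) ∈ ⋃₀ (pl '' G) := by
      rw [hc]; exact mem_univ _
    obtain ⟨_, ⟨U, hUG, rfl⟩, hx⟩ := hm
    exact ⟨U, hUG, hx rfl⟩
  · intro hGfin
    exact hi (hGfin.image pl)
  · intro K hK
    rcases eq_empty_or_nonempty K with rfl | hne
    · have : {U ∈ G | ¬ (∅ : Set X) ⊆ U} = ∅ := by
        ext U; simp
      rw [this]; exact finite_empty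
    · have hfin := hg {(⟨K, hK, hne⟩ : KSp X)} (finite_singleton _)
      have hsub : pl '' {U ∈ G | ¬ K ⊆ U} ⊆
          {C ∈ pl '' G | ¬ {(⟨K, hK, hne⟩ : KSp X)} ⊆ C} := by
        rintro _ ⟨U, hU, rfl⟩
        exact ⟨mem_image_of_mem _ hU.1, fun hsub => hU.2 (hsub rfl)⟩
      exact Set.Finite.of_finite_image (hfin.subset hsub) pl_injective.injOn

lemma gammaK_toKCover {G : Set (Set X)} (h : IsGammaKCover G) (hu : univ ∉ G) :
    IsKCover G := by
  refine ⟨h.1, h.2.1, hu, fun K hK => ?_⟩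
  obtain ⟨U, hU⟩ := (h.2.2.1.diff (h.2.2.2 K hK)).nonempty
  refine ⟨U, hU.1, ?_⟩
  by_contra hn
  exact hU.2 ⟨hU.1, hn⟩

/-- Pigeonhole: a function with finite image on an infinite set of naturals has an
infinite fiber. -/
lemma pigeon {α : Type*} {T : Set ℕ} (hT : T.Infinite) {W : ℕ → α}
    (himg : (W '' T).Finite) : ∃ v, {t ∈ T | W t = v}.Infinite := by
  by_contra hno
  push_neg at hno
  apply hT
  have hsub : T ⊆ ⋃ v ∈ W '' T, {t ∈ T | W t = v} := fun t ht =>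
    mem_biUnion (mem_image_of_mem _ ht) ⟨ht, rfl⟩
  exact (himg.biUnion fun v _ => hno v).subset hsub

/-- A selection with the property that every compact set is eventually inside the selected
sets forms a γₖ-cover. -/
lemma gammaK_of_eventual (𝒰 : ℕ → Set (Set X)) (hU : ∀ n, IsKCover (𝒰 n))
    (b : ℕ → Set X) (hb : ∀ n, b n ∈ 𝒰 n)
    (hev : ∀ K : Set X, IsCompact K → ∃ N, ∀ k, N ≤ k → K ⊆ b k) :
    IsGammaKCover (range b) := by
  have hopen : ∀ U ∈ range b, IsOpen U := by
    rintro _ ⟨k, rfl⟩; exact (hU k).1 _ (hb k)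
  have hcov : ⋃₀ range b = univ := by
    apply eq_univ_iff_forall.mpr
    intro x
    obtain ⟨N, hN⟩ := hev {x} isCompact_singleton
    exact ⟨b N, mem_range_self N, hN N le_rfl rfl⟩
  have hgam : ∀ K : Set X, IsCompact K → {U ∈ range b | ¬ K ⊆ U}.Finite := by
    intro K hK
    obtain ⟨N, hN⟩ := hev K hK
    apply ((finite_Iio N).image b).subset
    rintro U ⟨⟨k, rfl⟩, hbad⟩
    exact ⟨k, lt_of_not_ge fun hk => hbad (hN k hk), rfl⟩
  refine ⟨hopen, hcov, ?_, hgam⟩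
  by_contra hfin
  rw [Set.not_infinite] at hfin
  have hrange : (b '' univ).Finite := by rwa [image_univ]
  obtain ⟨v, hv⟩ := pigeon infinite_univ hrange
  have hvuniv : v = univ := by
    apply eq_univ_iff_forall.mpr
    intro x
    obtain ⟨N, hN⟩ := hev {x} isCompact_singleton
    obtain ⟨k, hk, hNk⟩ := hv.exists_gt N
    exact hk.2 ▸ hN k hNk.le rfl
  obtain ⟨k0, hk0⟩ := hv.nonempty
  exact (hU k0).2.2.1 (by rw [← hvuniv, ← hk0.2]; exact hb k0)

/-- The k-cover of intersections of the first `n+1` covers. -/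
def interW (𝒰 : ℕ → Set (Set X)) (n : ℕ) : Set (Set X) :=
  {W | ∃ V : ℕ → Set X, (∀ i, i ≤ n → V i ∈ 𝒰 i) ∧ W = ⋂ i ∈ Set.Iic n, V i}

lemma interW_sub {𝒰 : ℕ → Set (Set X)} {n : ℕ} {W : Set X} (hW : W ∈ interW 𝒰 n)
    {k : ℕ} (hk : k ≤ n) : ∃ V ∈ 𝒰 k, W ⊆ V := by
  obtain ⟨V, hV, rfl⟩ := hW
  exact ⟨V k, hV k hk, biInter_subset_of_mem hk⟩

lemma interW_isKCover {𝒰 : ℕ → Set (Set X)} (hU : ∀ n, IsKCover (𝒰 n)) (n : ℕ) :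
    IsKCover (interW 𝒰 n) := by
  have hex : ∀ K : Set X, IsCompact K → ∃ W ∈ interW 𝒰 n, K ⊆ W := by
    intro K hK
    have hch : ∀ i : ℕ, ∃ V ∈ 𝒰 i, K ⊆ V := fun i => (hU i).2.2.2 K hK
    choose V hV hKV using hch
    exact ⟨⋂ i ∈ Set.Iic n, V i, ⟨V, fun i _ => hV i, rfl⟩,
      subset_iInter₂ fun i _ => hKV i⟩
  refine ⟨?_, ?_, ?_, hex⟩
  · rintro W ⟨V, hV, rfl⟩
    exact (Set.finite_Iic n).isOpen_biInter fun i hi => (hU i).1 _ (hV i hi)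
  · apply eq_univ_iff_forall.mpr
    intro x
    obtain ⟨W, hW, hx⟩ := hex {x} isCompact_singleton
    exact ⟨W, hW, hx rfl⟩
  · rintro ⟨V, hV, hveq⟩
    have hsub : (univ : Set X) ⊆ V 0 := by
      rw [hveq]
      exact biInter_subset_of_mem (Set.mem_Iic.mpr (Nat.zero_le n))
    exact (hU 0).2.2.1 ((eq_univ_of_univ_subset hsub) ▸ hV 0 (Nat.zero_le n))

/-- Extracting a "first occurrences" index set on which a function is injective. -/
lemma fresh_exists {α : Type u} (W : ℕ → α) (T : Set ℕ) (h : (W '' T).Infinite) :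
    ∃ F : Set ℕ, F ⊆ T ∧ F.Infinite ∧ Set.InjOn W F := by
  classical
  set F : Set ℕ := {t ∈ T | ∀ s ∈ T, s < t → W s ≠ W t} with hF
  have himg : W '' F = W '' T := by
    apply Subset.antisymm (image_mono fun t ht => ht.1)
    rintro v ⟨t, htT, rfl⟩
    have hex : ∃ s, s ∈ T ∧ W s = W t := ⟨t, htT, rfl⟩
    have hm := Nat.find_spec hex
    refine ⟨Nat.find hex, ⟨hm.1, fun s hs hlt hWs => ?_⟩, hm.2⟩
    exact Nat.find_min hex hlt ⟨hs, hWs.trans hm.2⟩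
  have hinj : Set.InjOn W F := by
    intro a ha b hb hab
    rcases lt_trichotomy a b with hlt | he | hlt
    · exact absurd hab (hb.2 a ha.1 hlt)
    · exact he
    · exact absurd hab.symm (ha.2 b hb.1 hlt)
  refine ⟨F, fun t ht => ht.1, ?_, hinj⟩
  intro hfin
  exact h (himg ▸ hfin.image W)

/-- From an injective family with finitely many "bad" values we get an eventual bound. -/
lemma eventually_good {α : Type u} {F : Set ℕ} (hF : F.Infinite) {W : ℕ → α}
    (hinj : Set.InjOn W F) {P : α → Prop} (hbad : {v ∈ W '' F | ¬ P v}.Finite) :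
    ∃ N, ∀ t ∈ F, N ≤ t → P (W t) := by
  have hSfin : {t ∈ F | ¬ P (W t)}.Finite := by
    apply Set.Finite.of_finite_image _ (hinj.mono fun t ht => ht.1)
    apply hbad.subset
    rintro v ⟨t, ht, rfl⟩
    exact ⟨mem_image_of_mem _ ht.1, ht.2⟩
  obtain ⟨N, hN⟩ := hSfin.bddAbove
  refine ⟨N + 1, fun t ht hNt => ?_⟩
  by_contra hP
  have := hN ⟨ht, hP⟩
  omega

/-- `S₁(𝒦,Γₖ)` upgraded: the selection can be taken so that every compact set is eventually
contained in the selected sets. -/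
lemma S1seq (h5 : S1 (KCovers X) (GammaKCovers X)) (𝒰 : ℕ → Set (Set X))
    (hU : ∀ n, IsKCover (𝒰 n)) :
    ∃ b : ℕ → Set X, (∀ n, b n ∈ 𝒰 n) ∧
      (∀ K : Set X, IsCompact K → ∃ N, ∀ k, N ≤ k → K ⊆ b k) ∧
      IsGammaKCover (range b) := by
  obtain ⟨Wf, hWmem, hWγ⟩ := h5 (fun n => interW 𝒰 n) fun n => interW_isKCover hU n
  have hWγ' : IsGammaKCover (range Wf) := hWγ
  obtain ⟨F, _, hFinf, hFinj⟩ := fresh_exists Wf univ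
    (by rw [image_univ]; exact hWγ'.2.2.1)
  have hpick : ∀ k : ℕ, ∃ t, t ∈ F ∧ k ≤ t := fun k => by
    obtain ⟨t, ht, hkt⟩ := hFinf.exists_gt k
    exact ⟨t, ht, hkt.le⟩
  choose nk hnkF hnkge using hpick
  have hcomp : ∀ k, ∃ V ∈ 𝒰 k, Wf (nk k) ⊆ V := fun k =>
    interW_sub (hWmem (nk k)) (hnkge k)
  choose b hbmem hbsub using hcomp
  have hev : ∀ K : Set X, IsCompact K → ∃ N, ∀ k, N ≤ k → K ⊆ b k := by
    intro K hK
    have hbad : {v ∈ Wf '' F | ¬ K ⊆ v}.Finite := by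
      apply (hWγ'.2.2.2 K hK).subset
      rintro v ⟨⟨t, _, rfl⟩, hv⟩
      exact ⟨⟨t, rfl⟩, hv⟩
    obtain ⟨N, hN⟩ := eventually_good hFinf hFinj hbad
    exact ⟨N, fun k hk =>
      (hN (nk k) (hnkF k) (le_trans hk (hnkge k))).trans (hbsub k)⟩
  exact ⟨b, hbmem, hev, gammaK_of_eventual 𝒰 hU b hbmem hev⟩

/-- The key lemma: from `S₁(𝒦,Γₖ)` of `X`, selections from ω-covers of `𝕂(X)` forming a
γ-cover whose restriction to any infinite index set is infinite. -/
lemma key [Infinite X] (h5 : S1 (KCovers X) (GammaKCovers X))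
    (𝒜 : ℕ → Set (Set (KSp X))) (hA : ∀ m, IsOmegaCover (𝒜 m)) :
    ∃ A : ℕ → Set (KSp X), (∀ m, A m ∈ 𝒜 m) ∧ IsGammaCover (range A) ∧
      ∀ M : Set ℕ, M.Infinite → (A '' M).Infinite := by
  obtain ⟨x0⟩ : Nonempty X := inferInstance
  set 𝒰 : ℕ → Set (Set X) :=
    fun m => {U | IsOpen U ∧ U ≠ univ ∧ ∃ C ∈ 𝒜 m, pl U ⊆ C} with h𝒰
  have hUk : ∀ m, IsKCover (𝒰 m) := by
    intro m
    have hex : ∀ K : Set X, IsCompact K → ∃ U ∈ 𝒰 m, K ⊆ U := by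
      intro K hK
      set P : KSp X := ⟨K ∪ {x0}, hK.union isCompact_singleton,
        Set.union_nonempty.mpr (Or.inr (singleton_nonempty x0))⟩ with hP
      have hPm : P ∈ ⋃₀ 𝒜 m := by rw [(hA m).2.1]; exact mem_univ _
      obtain ⟨C, hC, hPC⟩ := hPm
      obtain ⟨U, hUo, hPU, hplU⟩ := exists_pl_subset ((hA m).1 C hC) P hPC
      have hUne : U ≠ univ := by
        intro he
        apply (hA m).2.2.1
        have hCu : C = univ := eq_univ_of_univ_subset (by
          rw [← pl_univ, ← he]; exact hplU)
        exact hCu ▸ hC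
      exact ⟨U, ⟨hUo, hUne, C, hC, hplU⟩, subset_union_left.trans hPU⟩
    refine ⟨fun U hU => hU.1, ?_, ?_, hex⟩
    · apply eq_univ_iff_forall.mpr
      intro x
      obtain ⟨U, hU, hx⟩ := hex {x} isCompact_singleton
      exact ⟨U, hU, hx rfl⟩
    · rintro ⟨_, hne, _⟩
      exact hne rfl
  obtain ⟨Uf, hUmem, hUev, _⟩ := S1seq h5 𝒰 hUk
  have hch : ∀ m, ∃ C ∈ 𝒜 m, pl (Uf m) ⊆ C := fun m => (hUmem m).2.2
  choose A hAmem hplA using hch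
  have hevP : ∀ F : Set (KSp X), F.Finite → ∃ N, ∀ m, N ≤ m → F ⊆ A m := by
    intro F hF
    obtain ⟨N, hN⟩ := hUev (⋃ P ∈ F, (P : KSp X).1)
      (hF.isCompact_biUnion fun P _ => P.2.1)
    refine ⟨N, fun m hm P hPF => hplA m ?_⟩
    exact (subset_biUnion_of_mem hPF).trans (hN m hm)
  have hMinf : ∀ M : Set ℕ, M.Infinite → (A '' M).Infinite := by
    intro M hM hAMfin
    obtain ⟨C, hC⟩ := pigeon hM hAMfin
    have hCuniv : C = univ := by
      apply eq_univ_iff_forall.mpr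
      intro P
      obtain ⟨N, hN⟩ := hevP {P} (finite_singleton _)
      obtain ⟨m, hm, hNm⟩ := hC.exists_gt N
      exact hm.2 ▸ hN m hNm.le rfl
    obtain ⟨m0, hm0⟩ := hC.nonempty
    exact (hA m0).2.2.1 (by rw [← hCuniv, ← hm0.2]; exact hAmem m0)
  refine ⟨A, hAmem, ⟨?_, ?_, ?_, ?_⟩, hMinf⟩
  · rintro _ ⟨m, rfl⟩
    exact (hA m).1 _ (hAmem m)
  · apply eq_univ_iff_forall.mpr
    intro P
    obtain ⟨N, hN⟩ := hevP {P} (finite_singleton _)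
    exact ⟨A N, mem_range_self N, hN N le_rfl rfl⟩
  · have := hMinf univ infinite_univ
    rwa [image_univ] at this
  · intro F hF
    obtain ⟨N, hN⟩ := hevP F hF
    apply ((finite_Iio N).image A).subset
    rintro C ⟨⟨m, rfl⟩, hbad⟩
    exact ⟨m, lt_of_not_ge fun hm => hbad (hN m hm), rfl⟩

/-- From `α₄(Ω,Γ)` of `𝕂(X)` and k-Lindelöfness: every k-cover of `X` contains an infinite
γₖ-subcover. -/
lemma gammaKprop (h3 : Alpha4 (OmegaCovers (KSp X)) (GammaCovers (KSp X)))
    (hL : KLindelof X) (𝒰 : Set (Set X)) (h𝒰 : IsKCover 𝒰) :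
    ∃ G ⊆ 𝒰, G.Infinite ∧ IsGammaKCover G := by
  obtain ⟨𝒞, h𝒞sub, h𝒞cnt, h𝒞k⟩ := hL 𝒰 h𝒰
  have h𝒞inf : 𝒞.Infinite := kcover_infinite h𝒞k
  have hco : Countable ↥𝒞 := h𝒞cnt.to_subtype
  have hin : Infinite ↥𝒞 := h𝒞inf.to_subtype
  obtain ⟨d⟩ := nonempty_denumerable ↥𝒞
  set f : ℕ → Set X := fun n => ((Denumerable.eqv ↥𝒞).symm n : ↥𝒞).1 with hfdef
  have hfinj : Function.Injective f := fun a b hab =>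
    (Denumerable.eqv ↥𝒞).symm.injective (Subtype.val_injective hab)
  have hfrange : range f = 𝒞 := by
    ext c
    constructor
    · rintro ⟨n, rfl⟩
      exact ((Denumerable.eqv ↥𝒞).symm n).2
    · intro hc
      exact ⟨Denumerable.eqv ↥𝒞 ⟨c, hc⟩, by simp [hfdef]⟩
  have htail : ∀ n : ℕ, IsKCover (f '' Set.Ici n) := by
    intro n
    have heq : f '' Set.Ici n = 𝒞 \ (f '' Set.Iio n) := by
      ext c
      constructor
      · rintro ⟨m, hm, rfl⟩
        refine ⟨hfrange ▸ mem_range_self m, ?_⟩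
        rintro ⟨m', hm', he⟩
        have := hfinj he
        subst this
        exact absurd (Set.mem_Iio.mp hm') (not_lt.mpr hm)
      · rintro ⟨hc, hnc⟩
        have : c ∈ range f := hfrange ▸ hc
        obtain ⟨m, rfl⟩ := this
        refine ⟨m, ?_, rfl⟩
        by_contra hmn
        exact hnc ⟨m, Set.mem_Iio.mpr (not_le.mp hmn), rfl⟩
    rw [heq]
    exact kcover_diff h𝒞k ((finite_Iio n).image f)
  have hsA : ∀ n : ℕ, (pl '' (f '' Set.Ici n)) ∈ OmegaCovers (KSp X) ∧
      (pl '' (f '' Set.Ici n)).Infinite := fun n =>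
    ⟨kcover_plus (htail n), ((Set.Ici_infinite n).image hfinj.injOn).image pl_injective.injOn⟩
  obtain ⟨B, hBΓ, hS⟩ := h3 _ hsA
  have hBΓ' : IsGammaCover B := hBΓ
  set M : Set ℕ := {m | pl (f m) ∈ B} with hM
  have hMinf : M.Infinite := by
    apply Set.infinite_of_forall_exists_gt
    intro a
    obtain ⟨n, hn, han⟩ := hS.exists_gt a
    obtain ⟨C, hC1, hC2⟩ := hn
    obtain ⟨_, ⟨m, hm, rfl⟩, rfl⟩ := hC1
    exact ⟨m, hC2, lt_of_lt_of_le han hm⟩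
  have hGsub : f '' M ⊆ 𝒰 := by
    rintro _ ⟨m, _, rfl⟩
    exact h𝒞sub (hfrange ▸ mem_range_self m)
  have hGinf : (f '' M).Infinite := hMinf.image hfinj.injOn
  have hplG : pl '' (f '' M) ⊆ B := by
    rintro _ ⟨_, ⟨m, hm, rfl⟩, rfl⟩
    exact hm
  have hγ : IsGammaCover (pl '' (f '' M)) :=
    gamma_mono hBΓ' hplG (hGinf.image pl_injective.injOn)
  exact ⟨f '' M, hGsub, hGinf, gammaK_of_pl (fun U hU => h𝒰.1 U (hGsub hU)) hγ⟩

/-- The hard implication: `α₄(Ω,Γ)` of `𝕂(X)` implies `S₁(𝒦,Γₖ)` of `X`. -/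
lemma three_to_five [Infinite X] (h3 : Alpha4 (OmegaCovers (KSp X)) (GammaCovers (KSp X)))
    (hL : KLindelof X) : S1 (KCovers X) (GammaKCovers X) := by
  intro 𝒰 hU
  have hUk : ∀ n, IsKCover (𝒰 n) := hU
  classical
  set Core : Set X → Prop := fun E => ∀ k, ∃ V ∈ 𝒰 k, E ⊆ V with hCore
  by_cases hP : ∃ n₀, ∃ K₀ : Set X, IsCompact K₀ ∧ ∀ W ∈ interW 𝒰 n₀, K₀ ⊆ W → Core W
  · -- Many cores: find a γₖ-cover of cores.
    obtain ⟨n₀, K₀, hK₀, hcore⟩ := hP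
    set 𝒢 : Set (Set X) := {W ∈ interW 𝒰 n₀ | K₀ ⊆ W} with h𝒢def
    have h𝒢ex : ∀ K : Set X, IsCompact K → ∃ W ∈ 𝒢, K ⊆ W := by
      intro K hK
      obtain ⟨W, hW, hKW⟩ := (interW_isKCover hUk n₀).2.2.2 (K ∪ K₀) (hK.union hK₀)
      exact ⟨W, ⟨hW, subset_union_right.trans hKW⟩, subset_union_left.trans hKW⟩
    have h𝒢 : IsKCover 𝒢 := by
      refine ⟨fun W hW => (interW_isKCover hUk n₀).1 W hW.1, ?_,
        fun hu => (interW_isKCover hUk n₀).2.2.1 hu.1, h𝒢ex⟩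
      apply eq_univ_iff_forall.mpr
      intro x
      obtain ⟨W, hW, hx⟩ := h𝒢ex {x} isCompact_singleton
      exact ⟨W, hW, hx rfl⟩
    obtain ⟨G, hGsub, hGinf, hGγ⟩ := gammaKprop h3 hL 𝒢 h𝒢
    set em := Set.Infinite.natEmbedding G hGinf with hem
    set E : ℕ → Set X := fun j => (em j : Set X) with hE
    have hEinj : Function.Injective E := fun a b h =>
      em.injective (Subtype.val_injective h)
    have hEG : ∀ j, E j ∈ G := fun j => (em j).2
    have hEcore : ∀ j, Core (E j) := fun j =>
      hcore _ (hGsub (hEG j)).1 (hGsub (hEG j)).2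
    have hb : ∀ k, ∃ V ∈ 𝒰 k, E k ⊆ V := fun k => hEcore k k
    choose b hbmem hbsub using hb
    have hev : ∀ K : Set X, IsCompact K → ∃ N, ∀ k, N ≤ k → K ⊆ b k := by
      intro K hK
      have hbad : {v ∈ E '' univ | ¬ K ⊆ v}.Finite := by
        apply (hGγ.2.2.2 K hK).subset
        rintro v ⟨⟨j, _, rfl⟩, h2⟩
        exact ⟨hEG j, h2⟩
      obtain ⟨N, hN⟩ := eventually_good infinite_univ hEinj.injOn hbad
      exact ⟨N, fun k hk => (hN k trivial hk).trans (hbsub k)⟩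
    exact ⟨b, hbmem, gammaK_of_eventual 𝒰 hUk b hbmem hev⟩
  · -- Few cores: core-free tails.
    push_neg at hP
    set 𝒯 : ℕ → Set (Set X) :=
      fun t => {W | ∃ n, t ≤ n ∧ W ∈ interW 𝒰 n ∧ ¬ Core W} with h𝒯def
    have h𝒯 : ∀ t, IsKCover (𝒯 t) := by
      intro t
      have hex : ∀ K : Set X, IsCompact K → ∃ W ∈ 𝒯 t, K ⊆ W := by
        intro K hK
        obtain ⟨W, hW, hKW, hnc⟩ := hP t K hK
        exact ⟨W, ⟨t, le_rfl, hW, hnc⟩, hKW⟩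
      refine ⟨?_, ?_, ?_, hex⟩
      · rintro W ⟨n, _, hW, _⟩
        exact (interW_isKCover hUk n).1 W hW
      · apply eq_univ_iff_forall.mpr
        intro x
        obtain ⟨W, hW, hx⟩ := hex {x} isCompact_singleton
        exact ⟨W, hW, hx rfl⟩
      · rintro ⟨n, _, hW, _⟩
        exact (interW_isKCover hUk n).2.2.1 hW
    have hG : ∀ t, ∃ G ⊆ 𝒯 t, G.Infinite ∧ IsGammaKCover G := fun t =>
      gammaKprop h3 hL _ (h𝒯 t)
    choose G hGsub hGinf hGγ using hG
    have hGk : ∀ t, IsKCover (G t) := fun t =>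
      gammaK_toKCover (hGγ t) fun hu => (h𝒯 t).2.2.1 (hGsub t hu)
    have hsA : ∀ t : ℕ, (pl '' G t) ∈ OmegaCovers (KSp X) ∧ (pl '' G t).Infinite :=
      fun t => ⟨kcover_plus (hGk t), (hGinf t).image pl_injective.injOn⟩
    obtain ⟨B, hBΓ, hS⟩ := h3 _ hsA
    have hBΓ' : IsGammaCover B := hBΓ
    set T : Set ℕ := {t | (pl '' G t ∩ B).Nonempty} with hT
    have hWc : ∀ t, t ∈ T → ∃ W, W ∈ G t ∧ pl W ∈ B := by
      intro t ht
      obtain ⟨C, hC1, hC2⟩ := ht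
      obtain ⟨W, hWG, rfl⟩ := hC1
      exact ⟨W, hWG, hC2⟩
    set Wh : ℕ → Set X := fun t => if h : t ∈ T then (hWc t h).choose else ∅ with hWh
    have hWhG : ∀ t, t ∈ T → Wh t ∈ G t := by
      intro t ht
      simp only [hWh, dif_pos ht]
      exact (hWc t ht).choose_spec.1
    have hWhB : ∀ t, t ∈ T → pl (Wh t) ∈ B := by
      intro t ht
      simp only [hWh, dif_pos ht]
      exact (hWc t ht).choose_spec.2
    by_cases hIf : (Wh '' T).Infinite
    · obtain ⟨F, hFT, hFinf, hFinj⟩ := fresh_exists Wh T hIf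
      have hpick : ∀ k : ℕ, ∃ t, t ∈ F ∧ k ≤ t := fun k => by
        obtain ⟨t, h1, h2⟩ := hFinf.exists_gt k
        exact ⟨t, h1, h2.le⟩
      choose tk htkF htkge using hpick
      have hcomp : ∀ k, ∃ V ∈ 𝒰 k, Wh (tk k) ⊆ V := by
        intro k
        obtain ⟨n, htn, hWn, -⟩ := hGsub (tk k) (hWhG (tk k) (hFT (htkF k)))
        exact interW_sub hWn (le_trans (htkge k) htn)
      choose b hbmem hbsub using hcomp
      have hev : ∀ K : Set X, IsCompact K → ∃ N, ∀ k, N ≤ k → K ⊆ b k := by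
        intro K hK
        rcases eq_empty_or_nonempty K with rfl | hKne
        · exact ⟨0, fun k _ => empty_subset _⟩
        have hbadB := hBΓ'.2.2.2 {(⟨K, hK, hKne⟩ : KSp X)} (finite_singleton _)
        have hbad : {v ∈ Wh '' F | ¬ K ⊆ v}.Finite := by
          apply Set.Finite.of_finite_image _ pl_injective.injOn
          apply hbadB.subset
          rintro _ ⟨v, ⟨⟨t, htF, rfl⟩, hKv⟩, rfl⟩
          exact ⟨hWhB t (hFT htF), fun hsub => hKv (hsub rfl)⟩
        obtain ⟨N, hN⟩ := eventually_good hFinf hFinj hbad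
        exact ⟨N, fun k hk =>
          (hN (tk k) (htkF k) (le_trans hk (htkge k))).trans (hbsub k)⟩
      exact ⟨b, hbmem, gammaK_of_eventual 𝒰 hUk b hbmem hev⟩
    · exfalso
      rw [Set.not_infinite] at hIf
      have hTinf : T.Infinite := hS
      obtain ⟨Wst, hWst⟩ := pigeon hTinf hIf
      have hcoreW : Core Wst := by
        intro k
        obtain ⟨t, ht, hkt⟩ := hWst.exists_gt k
        obtain ⟨n, htn, hWn, -⟩ := hGsub t (hWhG t ht.1)
        rw [ht.2] at hWn
        exact interW_sub hWn (le_trans hkt.le htn)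
      obtain ⟨t0, ht0⟩ := hWst.nonempty
      obtain ⟨n, -, -, hnc⟩ := hGsub t0 (hWhG t0 ht0.1)
      rw [ht0.2] at hnc
      exact hnc hcoreW

end Stmt13Aux

/-- Theorem: for a k-Lindelöf space `X`, the properties `α₂(Ω,Γ)`, `α₃(Ω,Γ)`, `α₄(Ω,Γ)`,
`S₁(Ω,Γ)` of `(𝕂(X), V⁺)` and `S₁(𝒦,Γₖ)` of `X` are all equivalent. -/
theorem stmt13 (X : Type u) [TopologicalSpace X] [T2Space X] [Infinite X]
    (hL : KLindelof X) :
    [Alpha2 (OmegaCovers (KSp X)) (GammaCovers (KSp X)),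
     Alpha3 (OmegaCovers (KSp X)) (GammaCovers (KSp X)),
     Alpha4 (OmegaCovers (KSp X)) (GammaCovers (KSp X)),
     S1 (OmegaCovers (KSp X)) (GammaCovers (KSp X)),
     S1 (KCovers X) (GammaKCovers X)].TFAE := by
  open Stmt13Aux in
  tfae_have 1 → 2 := by
    intro h1 A hA
    obtain ⟨B, hB, h⟩ := h1 A hA
    refine ⟨B, hB, ?_⟩
    have he : {n : ℕ | (A n ∩ B).Infinite} = univ := eq_univ_of_forall fun n => h n
    rw [he]
    exact infinite_univ
  tfae_have 2 → 3 := by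
    intro h2 A hA
    obtain ⟨B, hB, h⟩ := h2 A hA
    exact ⟨B, hB, h.mono fun n hn => hn.nonempty⟩
  tfae_have 4 → 3 := by
    intro h4 A hA
    obtain ⟨b, hb, hB⟩ := h4 A fun n => (hA n).1
    refine ⟨range b, hB, ?_⟩
    have he : {n : ℕ | (A n ∩ range b).Nonempty} = univ :=
      eq_univ_of_forall fun n => ⟨b n, hb n, mem_range_self n⟩
    rw [he]
    exact infinite_univ
  tfae_have 3 → 5 := fun h3 => Stmt13Aux.three_to_five h3 hL
  tfae_have 5 → 4 := by
    intro h5 A hA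
    obtain ⟨Af, hmem, hγ, -⟩ := Stmt13Aux.key h5 A hA
    exact ⟨Af, hmem, hγ⟩
  tfae_have 5 → 1 := by
    intro h5 A hA
    obtain ⟨Af, hmem, hγ, hM⟩ := Stmt13Aux.key h5 (fun m => A (Nat.unpair m).1)
      fun m => (hA _).1
    refine ⟨range Af, hγ, fun n => ?_⟩
    have hfib : {m : ℕ | (Nat.unpair m).1 = n}.Infinite :=
      Set.infinite_of_injective_forall_mem (f := fun k : ℕ => Nat.pair n k)
        (fun a b hab => by
          have := congrArg Nat.unpair hab
          simpa [Nat.unpair_pair] using this)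
        (fun k => by simp [Nat.unpair_pair])
    apply (hM _ hfib).mono
    rintro _ ⟨m, hm, rfl⟩
    exact ⟨hm ▸ hmem m, mem_range_self m⟩
  tfae_finish
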